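/- Define k_μ^Z(x,y) := ∑_{i=1}^ℓ κ_i f_i(x) f_i(y). There exists a measurable set A ⊆ 𝒳 with μ(A) = 1 such that k^Z(x,y) = k_μ^Z(x,y) for all x, y ∈ A. Moreover, if ker h_μ(Z,Z) ⊆ ker k(Z,Z), then k^Z(x,y) = k_μ^Z(x,y) for all x, y ∈ 𝒳. -/

import Mathlib

open scoped BigOperators
open Matrix MeasureTheory

/-- `B` is the Moore–Penrose pseudo-inverse of `A`. -/
def IsMoorePenrose {m n : Type*} [Fintype m] [Fintype n]
    (A : Matrix m n ℝ) (B : Matrix n m ℝ) : Prop :=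
  A * B * A = A ∧ B * A * B = B ∧ (A * B)ᵀ = A * B ∧ (B * A)ᵀ = B * A

/-- `k` is a (symmetric) positive definite kernel. -/
def IsPosDefKernel {𝒳 : Type*} (k : 𝒳 → 𝒳 → ℝ) : Prop :=
  (∀ x y, k x y = k y x) ∧
  ∀ (n : ℕ) (x : Fin n → 𝒳) (c : Fin n → ℝ),
    0 ≤ ∑ a, ∑ b, c a * c b * k (x a) (x b)

/-- with `k_μ^Z(x,y) = ∑ κ_i f_i(x) f_i(y)`, there is a
measurable set `A` of full measure with `k^Z = k_μ^Z` on `A × A`; and if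
`ker h_μ(Z,Z) ⊆ ker k(Z,Z)` the equality holds everywhere. -/
theorem stmt10
    {𝒳 : Type*} [MeasurableSpace 𝒳] (μ : Measure 𝒳) [IsProbabilityMeasure μ]
    (k : 𝒳 → 𝒳 → ℝ) (hpd : IsPosDefKernel k)
    (ℓ : ℕ) (Z : Fin ℓ → 𝒳)
    (hL2 : ∀ a, MemLp (fun x => k (Z a) x) 2 μ)
    (G : Matrix (Fin ℓ) (Fin ℓ) ℝ) (hG : ∀ a b, G a b = k (Z a) (Z b))
    (Kp : Matrix (Fin ℓ) (Fin ℓ) ℝ) (hKp : IsMoorePenrose G Kp)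
    (kZ : 𝒳 → 𝒳 → ℝ)
    (hkZ : ∀ x y, kZ x y = ∑ a, ∑ b, k x (Z a) * Kp a b * k (Z b) y)
    (hmu : Matrix (Fin ℓ) (Fin ℓ) ℝ)
    (hhmu : ∀ a b, hmu a b = ∫ x, k (Z a) x * k x (Z b) ∂μ)
    (Hm : Matrix (Fin ℓ) (Fin ℓ) ℝ) (hHm : Hmᵀ * Hm = hmu)
    (Hp : Matrix (Fin ℓ) (Fin ℓ) ℝ) (hHp : IsMoorePenrose Hm Hp)
    (V : Matrix (Fin ℓ) (Fin ℓ) ℝ) (hV : Vᵀ * V = 1)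
    (κ : Fin ℓ → ℝ)
    (hκmono : ∀ i j : Fin ℓ, i ≤ j → κ j ≤ κ i) (hκ0 : ∀ i, 0 ≤ κ i)
    (hVdecomp : Hm * Kp * Hmᵀ = V * Matrix.diagonal κ * Vᵀ)
    (f : Fin ℓ → 𝒳 → ℝ)
    (hf : ∀ i x, f i x = ∑ a, Hp.mulVec (fun b => V b i) a * k (Z a) x)
    (kmuZ : 𝒳 → 𝒳 → ℝ)
    (hkmuZ : ∀ x y, kmuZ x y = ∑ i, κ i * f i x * f i y) :
    (∃ A : Set 𝒳, MeasurableSet A ∧ μ A = 1 ∧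
      ∀ x ∈ A, ∀ y ∈ A, kZ x y = kmuZ x y) ∧
    ((∀ v : Fin ℓ → ℝ, hmu.mulVec v = 0 → G.mulVec v = 0) →
      ∀ x y, kZ x y = kmuZ x y) := by
  obtain ⟨hsym, -⟩ := hpd
  -- the vector of kernel values
  set u : 𝒳 → Fin ℓ → ℝ := fun x a => k (Z a) x with hu
  -- basic symmetries
  have hGsym : Gᵀ = G := by
    ext a b; simp only [Matrix.transpose_apply, hG]; exact hsym (Z b) (Z a)
  have hmusym : hmuᵀ = hmu := by
    rw [← hHm, Matrix.transpose_mul, Matrix.transpose_transpose]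
  -- the projection P and its complement M
  set P : Matrix (Fin ℓ) (Fin ℓ) ℝ := Hp * Hm with hP
  set M : Matrix (Fin ℓ) (Fin ℓ) ℝ := 1 - P with hM
  have hPsym : Pᵀ = P := hHp.2.2.2
  have hMsym : Mᵀ = M := by
    rw [hM, Matrix.transpose_sub, Matrix.transpose_one, hPsym]
  have hhmuM : hmu * M = 0 := by
    rw [hM, hP, Matrix.mul_sub, mul_one, ← hHm, mul_assoc, ← mul_assoc Hm Hp Hm,
      hHp.1, sub_self]
  have hMhmu : M * hmu = 0 := by
    have := congrArg Matrix.transpose hhmuM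
    rwa [Matrix.transpose_mul, hMsym, hmusym, Matrix.transpose_zero] at this
  -- kZ as a quadratic form
  have hkZ' : ∀ x y, kZ x y = u x ⬝ᵥ Kp.mulVec (u y) := by
    intro x y
    rw [hkZ]
    simp only [dotProduct, Matrix.mulVec, hu, Finset.mul_sum]
    refine Finset.sum_congr rfl fun a _ => Finset.sum_congr rfl fun b _ => ?_
    rw [hsym x (Z a)]; ring
  -- kmuZ as a quadratic form
  have hkmuZ' : ∀ x y, kmuZ x y = u x ⬝ᵥ (P * Kp * P).mulVec (u y) := by
    have hC : (Hp * V) * Matrix.diagonal κ * (Hp * V)ᵀ = P * Kp * P := by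
      rw [Matrix.transpose_mul]
      calc Hp * V * Matrix.diagonal κ * (Vᵀ * Hpᵀ)
          = Hp * (V * Matrix.diagonal κ * Vᵀ) * Hpᵀ := by
            simp only [mul_assoc]
        _ = Hp * (Hm * Kp * Hmᵀ) * Hpᵀ := by rw [hVdecomp]
        _ = (Hp * Hm) * Kp * (Hmᵀ * Hpᵀ) := by simp only [mul_assoc]
        _ = P * Kp * P := by rw [hP, ← Matrix.transpose_mul, hHp.2.2.2]
    intro x y
    have hfC : ∀ i x, f i x = ((Hp * V)ᵀ).mulVec (u x) i := by
      intro i x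
      rw [hf]
      simp only [Matrix.mulVec, dotProduct, Matrix.transpose_apply, Matrix.mul_apply, hu]
    rw [hkmuZ, ← hC]
    have step : ∀ (a b : Fin ℓ → ℝ),
        a ⬝ᵥ ((Hp * V) * Matrix.diagonal κ * (Hp * V)ᵀ).mulVec b
          = ((Hp * V)ᵀ.mulVec a) ⬝ᵥ (Matrix.diagonal κ).mulVec ((Hp * V)ᵀ.mulVec b) := by
      intro a b
      rw [Matrix.mulVec_transpose, Matrix.dotProduct_mulVec]
      rw [show (Hp * V) * Matrix.diagonal κ * (Hp * V)ᵀ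
            = (Hp * V) * (Matrix.diagonal κ * (Hp * V)ᵀ) by rw [mul_assoc]]
      rw [← Matrix.vecMul_vecMul, Matrix.mulVec_mulVec, Matrix.dotProduct_mulVec]
    rw [step]
    simp only [dotProduct, Matrix.mulVec_diagonal]
    refine Finset.sum_congr rfl fun i _ => ?_
    rw [hfC i x, hfC i y]; ring
  -- integrability of products
  have hprod : ∀ b c, Integrable (fun x => k (Z b) x * k (Z c) x) μ := by
    intro b c
    have h := (hL2 c).smul (φ := fun x => k (Z b) x) (r := 1) (hL2 b)
    rw [memLp_one_iff_integrable] at h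
    exact h
  -- the functions g a vanish a.e.
  have hgae : ∀ a : Fin ℓ, (fun x => ∑ b, M a b * k (Z b) x) =ᵐ[μ] 0 := by
    intro a
    set g : 𝒳 → ℝ := fun x => ∑ b, M a b * k (Z b) x with hg
    have hgL2 : MemLp g 2 μ := by
      apply memLp_finset_sum
      intro b _
      exact (hL2 b).const_mul (M a b)
    have hint : ∀ b c, Integrable (fun x => (M a b * k (Z b) x) * (M a c * k (Z c) x)) μ := by
      intro b c
      have := ((hprod b c).const_mul (M a b * M a c))
      refine this.congr (ae_of_all μ fun x => ?_)
      ring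
    have hsq : ∫ x, (g x) ^ 2 ∂μ = 0 := by
      have hexp : ∀ x, (g x) ^ 2 = ∑ b, ∑ c, (M a b * k (Z b) x) * (M a c * k (Z c) x) := by
        intro x
        rw [hg, sq, Finset.sum_mul_sum]
      calc ∫ x, (g x) ^ 2 ∂μ
          = ∫ x, ∑ b, ∑ c, (M a b * k (Z b) x) * (M a c * k (Z c) x) ∂μ := by
            simp_rw [hexp]
        _ = ∑ b, ∑ c, ∫ x, (M a b * k (Z b) x) * (M a c * k (Z c) x) ∂μ := by
            rw [integral_finset_sum _ fun b _ => integrable_finset_sum _ fun c _ => hint b c]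
            exact Finset.sum_congr rfl fun b _ =>
              integral_finset_sum _ fun c _ => hint b c
        _ = ∑ b, ∑ c, M a b * hmu b c * M a c := by
            refine Finset.sum_congr rfl fun b _ => Finset.sum_congr rfl fun c _ => ?_
            rw [hhmu]
            rw [show (fun x => (M a b * k (Z b) x) * (M a c * k (Z c) x))
                  = fun x => (M a b * M a c) * (k (Z b) x * k (Z c) x) by
                funext x; ring]
            rw [integral_const_mul]
            have : ∀ x, k (Z b) x * k (Z c) x = k (Z b) x * k x (Z c) := by
              intro x; rw [hsym x (Z c)]
            simp_rw [this]; ring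
        _ = ∑ c, (∑ b, M a b * hmu b c) * M a c := by
            rw [Finset.sum_comm]
            exact Finset.sum_congr rfl fun c _ => by rw [Finset.sum_mul]
        _ = 0 := by
            refine Finset.sum_eq_zero fun c _ => ?_
            have : (M * hmu) a c = 0 := by rw [hMhmu]; rfl
            rw [Matrix.mul_apply] at this
            rw [this, zero_mul]
    have h0 : (fun x => (g x) ^ 2) =ᵐ[μ] 0 := by
      rw [← integral_eq_zero_iff_of_nonneg_ae
        (ae_of_all μ fun x => sq_nonneg (g x)) hgL2.integrable_sq]
      exact hsq
    filter_upwards [h0] with x hx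
    have : (g x) ^ 2 = 0 := hx
    exact (pow_eq_zero_iff (two_ne_zero)).mp this
  constructor
  · -- a.e. part
    set S : Set 𝒳 := {x | ∀ a : Fin ℓ, ∑ b, M a b * k (Z b) x = 0} with hS
    have hSae : ∀ᵐ x ∂μ, x ∈ S := by
      rw [show (fun x => x ∈ S) = fun x => ∀ a : Fin ℓ, ∑ b, M a b * k (Z b) x = 0 from rfl,
        ae_all_iff]
      intro a
      filter_upwards [hgae a] with x hx using hx
    refine ⟨(toMeasurable μ Sᶜ)ᶜ, (measurableSet_toMeasurable μ Sᶜ).compl, ?_, ?_⟩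
    · rw [prob_compl_eq_one_iff (measurableSet_toMeasurable μ Sᶜ)]
      rw [measure_toMeasurable]
      exact ae_iff.mp hSae
    · intro x hx y hy
      have hxS : x ∈ S := by
        by_contra h
        exact hx (subset_toMeasurable μ Sᶜ h)
      have hyS : y ∈ S := by
        by_contra h
        exact hy (subset_toMeasurable μ Sᶜ h)
      have hfix : ∀ z ∈ S, P.mulVec (u z) = u z := by
        intro z hz
        have hMz : M.mulVec (u z) = 0 := by
          funext a
          exact hz a
        have : (1 - P).mulVec (u z) = 0 := by rw [← hM]; exact hMz
        rw [Matrix.sub_mulVec, Matrix.one_mulVec, sub_eq_zero] at this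
        exact this.symm
      rw [hkZ', hkmuZ']
      have h1 : (P * Kp * P).mulVec (u y) = P.mulVec (Kp.mulVec (u y)) := by
        rw [← Matrix.mulVec_mulVec, ← Matrix.mulVec_mulVec, hfix y hyS,
          Matrix.mulVec_mulVec]
      rw [h1]
      have h2 : u x ⬝ᵥ P.mulVec (Kp.mulVec (u y)) = (P.mulVec (u x)) ⬝ᵥ Kp.mulVec (u y) := by
        rw [Matrix.dotProduct_mulVec, ← Matrix.mulVec_transpose, hPsym]
      rw [h2, hfix x hxS]
  · -- everywhere part under the kernel condition
    intro hker x y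
    have hGM : G * M = 0 := by
      ext i j
      have hcol : hmu.mulVec (fun b => M b j) = 0 := by
        funext i'
        have : (hmu * M) i' j = 0 := by rw [hhmuM]; rfl
        rw [Matrix.mul_apply] at this
        exact this
      have := hker _ hcol
      have hGi : G.mulVec (fun b => M b j) i = 0 := by rw [this]; rfl
      rw [Matrix.mulVec] at hGi
      rw [Matrix.mul_apply]
      exact hGi
    have hKpM : Kp * M = 0 := by
      have h1 : Kp = Kp * Kpᵀ * Gᵀ := by
        have : Kp * G * Kp = Kp := hKp.2.1
        calc Kp = Kp * G * Kp := this.symm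
          _ = Kp * (G * Kp) := by rw [mul_assoc]
          _ = Kp * (G * Kp)ᵀ := by rw [hKp.2.2.1]
          _ = Kp * (Kpᵀ * Gᵀ) := by rw [Matrix.transpose_mul]
          _ = Kp * Kpᵀ * Gᵀ := by rw [mul_assoc]
      calc Kp * M = Kp * Kpᵀ * Gᵀ * M := by rw [← h1]
        _ = Kp * Kpᵀ * (G * M) := by rw [hGsym, mul_assoc]
        _ = 0 := by rw [hGM, mul_zero]
    have hMKp : M * Kp = 0 := by
      have h1 : Kp = Gᵀ * Kpᵀ * Kp := by
        have : Kp * G * Kp = Kp := hKp.2.1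
        calc Kp = Kp * G * Kp := this.symm
          _ = (Kp * G) * Kp := by rw [mul_assoc]
          _ = (Kp * G)ᵀ * Kp := by rw [hKp.2.2.2]
          _ = Gᵀ * Kpᵀ * Kp := by rw [Matrix.transpose_mul]
      have hMG : M * G = 0 := by
        have := congrArg Matrix.transpose hGM
        rwa [Matrix.transpose_mul, hMsym, hGsym, Matrix.transpose_zero] at this
      calc M * Kp = M * (Gᵀ * Kpᵀ * Kp) := by rw [← h1]
        _ = (M * G) * (Kpᵀ * Kp) := by rw [hGsym]; simp only [mul_assoc]
        _ = 0 := by rw [hMG, zero_mul]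
    have hPKpP : P * Kp * P = Kp := by
      have hPKp : P * Kp = Kp := by
        have : (1 - M) * Kp = Kp := by rw [sub_mul, one_mul, hMKp, sub_zero]
        calc P * Kp = (1 - M) * Kp := by rw [hM, sub_sub_cancel]
          _ = Kp := this
      have hKpP : Kp * P = Kp := by
        have : Kp * (1 - M) = Kp := by rw [mul_sub, mul_one, hKpM, sub_zero]
        calc Kp * P = Kp * (1 - M) := by rw [hM, sub_sub_cancel]
          _ = Kp := this
      rw [hPKp, hKpP]
    rw [hkZ', hkmuZ', hPKpP]
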